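/- The general solution stays on the invariant nonagon: fix κ > 0 and let Ω : ℝ → ℝ be the 9κ-periodic piecewise linear function defined for u ∈ [0, 9κ) by Ω(u) = min( max(κ − u, −κ, u − 4κ), max(κ, u − 5κ), max(9κ − u, κ) ) and extended by Ω(u + 9κ) = Ω(u). Then for every u ∈ ℝ, the point (Ω(u), Ω(u − 2κ)) lies on Υ_κ, i.e. min( H(Ω(u), Ω(u−2κ)), H(Ω(u−2κ), Ω(u)) ) = κ. -/
import Mathlib


/-- `H(x,y) = max(x, -y, -x+y, -x-y)`. -/
noncomputable def H (x y : ℝ) : ℝ :=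
  max x (max (-y) (max (-x + y) (-x - y)))

/-- The `9κ`-periodic piecewise linear function given for `u ∈ [0, 9κ)` by
`Ω(u) = min( max(κ−u, −κ, u−4κ), max(κ, u−5κ), max(9κ−u, κ) )` and extended to
all of `ℝ` by `Ω(u + 9κ) = Ω(u)` (here `u − 9κ⌊u/(9κ)⌋` is the representative
of `u` in `[0, 9κ)`). -/
noncomputable def Omega (κ u : ℝ) : ℝ :=
  let v := u - 9 * κ * ⌊u / (9 * κ)⌋
  min (min (max (max (κ - v) (-κ)) (v - 4 * κ)) (max κ (v - 5 * κ)))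
    (max (9 * κ - v) κ)

/-- The formula for `Omega` on a fundamental domain, as a function of the
representative `v`. -/
noncomputable def Om (κ v : ℝ) : ℝ :=
  min (min (max (max (κ - v) (-κ)) (v - 4 * κ)) (max κ (v - 5 * κ)))
    (max (9 * κ - v) κ)

lemma H_le {x y c : ℝ} (h1 : x ≤ c) (h2 : -y ≤ c) (h3 : -x + y ≤ c)
    (h4 : -x - y ≤ c) : H x y ≤ c := by
  unfold H; exact max_le h1 (max_le h2 (max_le h3 h4))

lemma H_ge1 {x y c : ℝ} (h : c ≤ x) : c ≤ H x y := by
  unfold H; exact le_trans h (le_max_left _ _)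

lemma H_ge2 {x y c : ℝ} (h : c ≤ -y) : c ≤ H x y := by
  unfold H; exact le_trans h (le_max_of_le_right (le_max_left _ _))

lemma H_ge3 {x y c : ℝ} (h : c ≤ -x + y) : c ≤ H x y := by
  unfold H
  exact le_trans h (le_max_of_le_right (le_max_of_le_right (le_max_left _ _)))

lemma H_ge4 {x y c : ℝ} (h : c ≤ -x - y) : c ≤ H x y := by
  unfold H
  exact le_trans h (le_max_of_le_right (le_max_of_le_right (le_max_right _ _)))

lemma om1 {κ v : ℝ} (hκ : 0 < κ) (h0 : 0 ≤ v) (h1 : v ≤ 2 * κ) : Om κ v = κ - v := by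
  simp only [Om, min_def, max_def]; split_ifs <;> linarith

lemma om2 {κ v : ℝ} (hκ : 0 < κ) (h0 : 2 * κ ≤ v) (h1 : v ≤ 3 * κ) : Om κ v = -κ := by
  simp only [Om, min_def, max_def]; split_ifs <;> linarith

lemma om3 {κ v : ℝ} (hκ : 0 < κ) (h0 : 3 * κ ≤ v) (h1 : v ≤ 5 * κ) : Om κ v = v - 4 * κ := by
  simp only [Om, min_def, max_def]; split_ifs <;> linarith

lemma om4 {κ v : ℝ} (hκ : 0 < κ) (h0 : 5 * κ ≤ v) (h1 : v ≤ 6 * κ) : Om κ v = κ := by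
  simp only [Om, min_def, max_def]; split_ifs <;> linarith

lemma om5 {κ v : ℝ} (hκ : 0 < κ) (h0 : 6 * κ ≤ v) (h1 : v ≤ 7 * κ) : Om κ v = v - 5 * κ := by
  simp only [Om, min_def, max_def]; split_ifs <;> linarith

lemma om6 {κ v : ℝ} (hκ : 0 < κ) (h0 : 7 * κ ≤ v) (h1 : v ≤ 8 * κ) : Om κ v = 9 * κ - v := by
  simp only [Om, min_def, max_def]; split_ifs <;> linarith

lemma om7 {κ v : ℝ} (hκ : 0 < κ) (h0 : 8 * κ ≤ v) (h1 : v ≤ 9 * κ) : Om κ v = κ := by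
  simp only [Om, min_def, max_def]; split_ifs <;> linarith

lemma key (κ v w : ℝ) (hκ : 0 < κ) (hv0 : 0 ≤ v) (hv9 : v < 9 * κ)
    (hw0 : 0 ≤ w) (hw9 : w < 9 * κ) (hw : w = v - 2 * κ ∨ w = v + 7 * κ) :
    min (H (Om κ v) (Om κ w)) (H (Om κ w) (Om κ v)) = κ := by
  rcases hw with hw | hw <;> subst hw
  · -- w = v - 2κ, so 2κ ≤ v < 9κ
    rcases le_total v (3 * κ) with h3 | h3
    · -- B1: x = -κ, y = 3κ - v
      rw [om2 hκ (by linarith) h3, om1 hκ (by linarith) (by linarith)]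
      refine le_antisymm
        (min_le_of_right_le (H_le (by linarith) (by linarith) (by linarith) (by linarith)))
        (le_min (H_ge3 (by linarith)) (H_ge2 (by linarith)))
    · rcases le_total v (4 * κ) with h4 | h4
      · -- B2: x = v - 4κ, y = 3κ - v
        rw [om3 hκ (by linarith) (by linarith), om1 hκ (by linarith) (by linarith)]
        refine le_antisymm
          (min_le_of_left_le (H_le (by linarith) (by linarith) (by linarith) (by linarith)))
          (le_min (H_ge4 (by linarith)) (H_ge4 (by linarith)))
      · rcases le_total v (5 * κ) with h5 | h5
        · -- B3: x = v - 4κ, y = -κ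
          rw [om3 hκ (by linarith) h5, om2 hκ (by linarith) (by linarith)]
          refine le_antisymm
            (min_le_of_left_le (H_le (by linarith) (by linarith) (by linarith) (by linarith)))
            (le_min (H_ge2 (by linarith)) (H_ge3 (by linarith)))
        · rcases le_total v (6 * κ) with h6 | h6
          · -- B4: x = κ, y = v - 6κ
            rw [om4 hκ h5 h6, om3 hκ (by linarith) (by linarith)]
            refine le_antisymm
              (min_le_of_left_le (H_le (by linarith) (by linarith) (by linarith) (by linarith)))
              (le_min (H_ge1 (by linarith)) (H_ge3 (by linarith)))
          · rcases le_total v (7 * κ) with h7 | h7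
            · -- B5: x = v - 5κ, y = v - 6κ
              rw [om5 hκ h6 h7, om3 hκ (by linarith) (by linarith)]
              refine le_antisymm
                (min_le_of_right_le (H_le (by linarith) (by linarith) (by linarith) (by linarith)))
                (le_min (H_ge1 (by linarith)) (H_ge3 (by linarith)))
            · rcases le_total v (8 * κ) with h8 | h8
              · -- B6: x = 9κ - v, y = κ
                rw [om6 hκ h7 h8, om4 hκ (by linarith) (by linarith)]
                refine le_antisymm
                  (min_le_of_right_le (H_le (by linarith) (by linarith) (by linarith) (by linarith)))
                  (le_min (H_ge1 (by linarith)) (H_ge1 (by linarith)))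
              · -- B7: x = κ, y = v - 7κ
                rw [om7 hκ h8 (by linarith), om5 hκ (by linarith) (by linarith)]
                refine le_antisymm
                  (min_le_of_left_le (H_le (by linarith) (by linarith) (by linarith) (by linarith)))
                  (le_min (H_ge1 (by linarith)) (H_ge1 (by linarith)))
  · -- w = v + 7κ, so 0 ≤ v < 2κ
    rcases le_total v κ with h1 | h1
    · -- A1: x = κ - v, y = 2κ - v
      rw [om1 hκ hv0 (by linarith), om6 hκ (by linarith) (by linarith)]
      refine le_antisymm
        (min_le_of_left_le (H_le (by linarith) (by linarith) (by linarith) (by linarith)))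
        (le_min (H_ge3 (by linarith)) (H_ge1 (by linarith)))
    · -- A2: x = κ - v, y = κ
      rw [om1 hκ hv0 (by linarith), om7 hκ (by linarith) (by linarith)]
      refine le_antisymm
        (min_le_of_right_le (H_le (by linarith) (by linarith) (by linarith) (by linarith)))
        (le_min (H_ge3 (by linarith)) (H_ge1 (by linarith)))

lemma repr_mem (κ : ℝ) (hκ : 0 < κ) (u : ℝ) :
    0 ≤ u - 9 * κ * ⌊u / (9 * κ)⌋ ∧ u - 9 * κ * ⌊u / (9 * κ)⌋ < 9 * κ := by
  have h9 : (0:ℝ) < 9 * κ := by linarith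
  have h1 := Int.floor_le (u / (9 * κ))
  have h2 := Int.lt_floor_add_one (u / (9 * κ))
  constructor
  · have := (le_div_iff₀ h9).mp h1
    linarith
  · have := (div_lt_iff₀ h9).mp h2
    linarith

/-- The general solution stays on the invariant nonagon: the point
`(Ω(u), Ω(u − 2κ))` lies on `Υ_κ` for every `u`. -/
theorem general_solution_on_nonagon (κ : ℝ) (hκ : 0 < κ) (u : ℝ) :
    min (H (Omega κ u) (Omega κ (u - 2 * κ)))
      (H (Omega κ (u - 2 * κ)) (Omega κ u)) = κ := by
  have h9 : (0:ℝ) < 9 * κ := by linarith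
  obtain ⟨hv0, hv9⟩ := repr_mem κ hκ u
  obtain ⟨hw0, hw9⟩ := repr_mem κ hκ (u - 2 * κ)
  have heq : Omega κ u = Om κ (u - 9 * κ * ⌊u / (9 * κ)⌋) := rfl
  have heq2 : Omega κ (u - 2 * κ) =
      Om κ ((u - 2 * κ) - 9 * κ * ⌊(u - 2 * κ) / (9 * κ)⌋) := rfl
  rw [heq, heq2]
  apply key κ _ _ hκ hv0 hv9 hw0 hw9
  set a : ℤ := ⌊u / (9 * κ)⌋ with ha
  set b : ℤ := ⌊(u - 2 * κ) / (9 * κ)⌋ with hb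
  have hab : (u - 2 * κ) - 9 * κ * b =
      (u - 9 * κ * a) - 2 * κ + 9 * κ * ((a - b : ℤ) : ℝ) := by push_cast; ring
  set n : ℤ := a - b with hn
  have hnlt : ((n : ℤ) : ℝ) < 2 := by
    have h : 9 * κ * ((n : ℤ) : ℝ) < 9 * κ * 2 := by linarith
    exact lt_of_mul_lt_mul_left h (le_of_lt h9)
  have hngt : (-1 : ℝ) < ((n : ℤ) : ℝ) := by
    have h : 9 * κ * (-1 : ℝ) < 9 * κ * ((n : ℤ) : ℝ) := by linarith
    exact lt_of_mul_lt_mul_left h (le_of_lt h9)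
  have hn2 : n < 2 := by exact_mod_cast hnlt
  have hn1 : (-1 : ℤ) < n := by exact_mod_cast hngt
  interval_cases n
  · left
    rw [hab]
    push_cast
    ring
  · right
    rw [hab]
    push_cast
    ring
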